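/- Let Γ = ⟨α_1, …, α_k⟩ ⊂ ℕ^d be an affine semigroup and γ ∈ Γ. For each i ≤ k with γ − α_i ∈ Γ, let T_i denote the image in K_γ of a minimum weight spanning tree of K_{γ−α_i} under the cover morphism ψ_i (the map sending each factorization z ∈ Z_Γ(γ−α_i) to z + e_i ∈ Z_Γ(γ), where e_i is the i-th standard basis vector). Let E' be the set of elements of the Graver basis of Γ that lie in Z_Γ(γ) × Z_Γ(γ). Then the graph G' with vertex set Z_Γ(γ) and edge set E(T_1) ∪ ⋯ ∪ E(T_k) ∪ E' is connected. -/

import Mathlib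

open Finset

/-- The factorization homomorphism `φ_Γ : ℕ^k → ℕ^d` determined by the
generators `α 1, …, α k`. -/
def phi {d k : ℕ} (α : Fin k → Fin d → ℕ) (z : Fin k → ℕ) : Fin d → ℕ :=
  ∑ i, z i • α i

/-- The length `|z|` of a factorization. -/
def len {k : ℕ} (z : Fin k → ℕ) : ℕ := ∑ i, z i

/-- The greatest common divisor `gcd(z,w)` of two factorizations. -/
def gcdF {k : ℕ} (z w : Fin k → ℕ) : Fin k → ℕ := fun i => min (z i) (w i)

/-- The distance `dist(z,w) = max(|z − gcd(z,w)|, |w − gcd(z,w)|)`. -/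
def distF {k : ℕ} (z w : Fin k → ℕ) : ℕ :=
  max (len (z - gcdF z w)) (len (w - gcdF z w))

/-- The set of factorizations `Z_Γ(γ)`, as a type. -/
def FactType {d k : ℕ} (α : Fin k → Fin d → ℕ) (γ : Fin d → ℕ) : Type :=
  {z : Fin k → ℕ // phi α z = γ}

/-- The weight of a walk in an edge-weighted graph: the maximum of the weights
of its edges (`0` for a trivial walk). -/
def walkWeight {V : Type*} (wt : V → V → ℕ) {G : SimpleGraph V} {u v : V}
    (p : G.Walk u v) : ℕ :=
  (p.darts.map fun e => wt e.toProd.1 e.toProd.2).foldr max 0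

/-- `T` is a minimum weight spanning tree of the graph `G` with edge weights
`wt`: it is a spanning tree of `G`, and the unique path in `T` between any two
vertices is a minimum weight chain in `G`. -/
def IsMWSpanningTree {V : Type*} (wt : V → V → ℕ) (G T : SimpleGraph V) : Prop :=
  T ≤ G ∧ T.IsTree ∧
    ∀ (u v : V) (p : T.Walk u v), p.IsPath →
      ∀ q : G.Walk u v, walkWeight wt p ≤ walkWeight wt q

/-- There is an `N`-chain from `z` to `w` (w.r.t. the distance function `wt`). -/
def IsNChain {V : Type*} (wt : V → V → ℕ) (N : ℕ) (z w : V) : Prop :=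
  ∃ (r : ℕ) (c : Fin (r + 1) → V), c 0 = z ∧ c (Fin.last r) = w ∧
    ∀ i : Fin r, wt (c i.castSucc) (c i.succ) ≤ N

/-- The catenary degree `c(γ)`: the smallest `N` such that any two
factorizations of `γ` are connected by an `N`-chain. -/
noncomputable def catDeg {d k : ℕ} (α : Fin k → Fin d → ℕ) (γ : Fin d → ℕ) : ℕ :=
  sInf {N : ℕ | ∀ z w : FactType α γ,
    IsNChain (fun a b => distF a.val b.val) N z w}

/-- The set of factorizations `Z_Γ(γ − α_i)`, realized as the set of `z` with
`φ_Γ(z) + α_i = γ` (it is empty when `γ − α_i ∉ Γ`). -/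
def FactSub {d k : ℕ} (α : Fin k → Fin d → ℕ) (γ : Fin d → ℕ) (i : Fin k) : Type :=
  {z : Fin k → ℕ // phi α z + α i = γ}

/-- `p` belongs to the Graver basis of `Γ`: `p` is a minimal element, with
respect to the componentwise order on `ℕ^k × ℕ^k`, of
`{(z,w) : φ_Γ(z) = φ_Γ(w)} \ {(0,0)}`. -/
def IsGraver {d k : ℕ} (α : Fin k → Fin d → ℕ)
    (p : (Fin k → ℕ) × (Fin k → ℕ)) : Prop :=
  phi α p.1 = phi α p.2 ∧ p ≠ 0 ∧
    ∀ q : (Fin k → ℕ) × (Fin k → ℕ),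
      phi α q.1 = phi α q.2 → q ≠ 0 → q ≤ p → q = p

/-- The graph `G'` on `Z_Γ(γ)` whose edges are the images under the cover
morphisms `ψ_i : z ↦ z + e_i` of the edges of the trees `T i` on `Z_Γ(γ − α_i)`,
together with the Graver basis elements lying in `Z_Γ(γ) × Z_Γ(γ)`. -/
def Gprime {d k : ℕ} (α : Fin k → Fin d → ℕ) (γ : Fin d → ℕ)
    (T : ∀ i : Fin k, SimpleGraph (FactSub α γ i)) :
    SimpleGraph (FactType α γ) :=
  SimpleGraph.fromRel fun u v =>
    (∃ (i : Fin k) (z w : FactSub α γ i), (T i).Adj z w ∧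
      u.val = z.val + Pi.single i 1 ∧ v.val = w.val + Pi.single i 1) ∨
    IsGraver α (u.val, v.val)


namespace Stmt9Aux

lemma phi_add {d k : ℕ} (α : Fin k → Fin d → ℕ) (x y : Fin k → ℕ) :
    phi α (x + y) = phi α x + phi α y := by
  simp [phi, add_smul, Finset.sum_add_distrib]

lemma phi_single {d k : ℕ} (α : Fin k → Fin d → ℕ) (i : Fin k) :
    phi α (Pi.single i 1) = α i := by
  simp [phi, Pi.single_apply]

lemma phi_zero {d k : ℕ} (α : Fin k → Fin d → ℕ) : phi α 0 = 0 := by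
  simp [phi]

lemma len_pos {k : ℕ} {x : Fin k → ℕ} (h : x ≠ 0) : 0 < len x := by
  rcases Nat.eq_zero_or_pos (len x) with h0 | h0
  · exfalso
    apply h
    funext i
    have := (Finset.sum_eq_zero_iff).mp h0 i (Finset.mem_univ i)
    simpa using this
  · exact h0

lemma len_lt_of_lt {k : ℕ} {x y : Fin k → ℕ} (hle : x ≤ y) (hne : x ≠ y) : len x < len y := by
  have : ∃ i, x i ≠ y i := by
    by_contra h; push_neg at h; exact hne (funext h)
  obtain ⟨i, hi⟩ := this
  exact Finset.sum_lt_sum (fun j _ => hle j) ⟨i, Finset.mem_univ i, lt_of_le_of_ne (hle i) hi⟩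

lemma fn_exists_pos {k : ℕ} {x : Fin k → ℕ} (h : x ≠ 0) : ∃ i, 0 < x i := by
  by_contra hc
  push_neg at hc
  exact h (funext fun i => Nat.le_zero.mp (hc i))

lemma graver_swap {d k : ℕ} {α : Fin k → Fin d → ℕ} {a b : Fin k → ℕ}
    (h : IsGraver α (a, b)) : IsGraver α (b, a) := by
  obtain ⟨h1, h2, h3⟩ := h
  refine ⟨h1.symm, ?_, ?_⟩
  · intro h0
    rw [Prod.ext_iff] at h0
    exact h2 (Prod.ext h0.2 h0.1)
  · intro q hq hq0 hqle
    have := h3 (q.2, q.1) hq.symm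
      (by intro h0; rw [Prod.ext_iff] at h0; exact hq0 (Prod.ext h0.2 h0.1))
      ⟨hqle.2, hqle.1⟩
    rw [Prod.ext_iff] at this ⊢
    exact ⟨this.2, this.1⟩

lemma exists_graver {d k : ℕ} (α : Fin k → Fin d → ℕ) :
    ∀ (n : ℕ) (z w : Fin k → ℕ), len z + len w ≤ n → phi α z = phi α w → (z, w) ≠ 0 →
      ∃ a b, IsGraver α (a, b) ∧ a ≤ z ∧ b ≤ w := by
  intro n
  induction n using Nat.strong_induction_on with
  | _ n IH =>
    intro z w hn hphi hne
    by_cases hmin : ∀ q : (Fin k → ℕ) × (Fin k → ℕ),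
        phi α q.1 = phi α q.2 → q ≠ 0 → q ≤ (z, w) → q = (z, w)
    · exact ⟨z, w, ⟨hphi, hne, hmin⟩, le_refl _, le_refl _⟩
    · push_neg at hmin
      obtain ⟨q, hq1, hq0, hqle, hqne⟩ := hmin
      have hlt : len q.1 + len q.2 < len z + len w := by
        have h1 : q.1 ≤ z := hqle.1
        have h2 : q.2 ≤ w := hqle.2
        rcases (by
          by_contra h
          push_neg at h
          exact hqne (Prod.ext h.1 h.2) : q.1 ≠ z ∨ q.2 ≠ w) with h | h
        · have := len_lt_of_lt h1 h
          have := Finset.sum_le_sum (fun i (_ : i ∈ Finset.univ) => h2 i)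
          simp only [len] at *
          omega
        · have := len_lt_of_lt h2 h
          have := Finset.sum_le_sum (fun i (_ : i ∈ Finset.univ) => h1 i)
          simp only [len] at *
          omega
      obtain ⟨a, b, hg, ha, hb⟩ := IH (len q.1 + len q.2) (lt_of_lt_of_le hlt hn)
        q.1 q.2 le_rfl hq1 hq0
      exact ⟨a, b, hg, ha.trans hqle.1, hb.trans hqle.2⟩

lemma graverReach {d k : ℕ} {α : Fin k → Fin d → ℕ} {γ : Fin d → ℕ}
    {T : ∀ i : Fin k, SimpleGraph (FactSub α γ i)} (u v : FactType α γ)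
    (hne : u ≠ v) (hg : IsGraver α (u.val, v.val)) :
    (Gprime α γ T).Reachable u v := by
  refine SimpleGraph.Adj.reachable ?_
  rw [Gprime, SimpleGraph.fromRel_adj]
  exact ⟨hne, Or.inl (Or.inr hg)⟩

lemma treeReach {d k : ℕ} {α : Fin k → Fin d → ℕ} {γ : Fin d → ℕ}
    {T : ∀ i : Fin k, SimpleGraph (FactSub α γ i)}
    (hT : ∀ i : Fin k, Nonempty (FactSub α γ i) →
      IsMWSpanningTree (fun z w => distF z.val w.val) ⊤ (T i))
    (u v : FactType α γ) (i : Fin k) (hu : 0 < u.val i) (hv : 0 < v.val i) :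
    (Gprime α γ T).Reachable u v := by
  have hsingle_u : Pi.single i 1 ≤ u.val := by
    intro j
    rcases eq_or_ne j i with rfl | hj
    · simp only [Pi.single_eq_same]; exact hu
    · simp [Pi.single_apply, hj]
  have hsingle_v : Pi.single i 1 ≤ v.val := by
    intro j
    rcases eq_or_ne j i with rfl | hj
    · simp only [Pi.single_eq_same]; exact hv
    · simp [Pi.single_apply, hj]
  have mem_sub : ∀ (x : Fin k → ℕ), Pi.single i 1 ≤ x → phi α x = γ →
      phi α (x - Pi.single i 1) + α i = γ := by
    intro x hle hx
    rw [← phi_single α i, ← phi_add, tsub_add_cancel_of_le hle, hx]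
  let zu : FactSub α γ i := ⟨u.val - Pi.single i 1, mem_sub _ hsingle_u u.property⟩
  let zv : FactSub α γ i := ⟨v.val - Pi.single i 1, mem_sub _ hsingle_v v.property⟩
  have hne : Nonempty (FactSub α γ i) := ⟨zu⟩
  obtain ⟨-, htree, -⟩ := hT i hne
  have hreach : (T i).Reachable zu zv := htree.isConnected.preconnected zu zv
  let f : FactSub α γ i → FactType α γ := fun z =>
    ⟨z.val + Pi.single i 1, by rw [phi_add, phi_single]; exact z.property⟩
  let hom : T i →g Gprime α γ T :=
    ⟨f, by
      intro a b hab
      rw [Gprime, SimpleGraph.fromRel_adj]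
      constructor
      · intro h
        apply hab.ne
        apply Subtype.ext
        have := congrArg Subtype.val h
        exact add_right_cancel this
      · exact Or.inl (Or.inl ⟨i, a, b, hab, rfl, rfl⟩)⟩
  have hmap := hreach.map hom
  have hfu : hom zu = u := Subtype.ext (by
    show u.val - Pi.single i 1 + Pi.single i 1 = u.val
    exact tsub_add_cancel_of_le hsingle_u)
  have hfv : hom zv = v := Subtype.ext (by
    show v.val - Pi.single i 1 + Pi.single i 1 = v.val
    exact tsub_add_cancel_of_le hsingle_v)
  rwa [hfu, hfv] at hmap

end Stmt9Aux

/-- If each `T i` is (the image under `ψ_i` of) a minimum weight spanning tree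
of the catenary graph `K_{γ−α_i}` (whenever `γ − α_i ∈ Γ`), then the graph `G'`
with vertex set `Z_Γ(γ)` and edges `E(T_1) ∪ ⋯ ∪ E(T_k) ∪ E'` is connected. -/
theorem stmt9 {d k : ℕ} (α : Fin k → Fin d → ℕ) (γ : Fin d → ℕ)
    (hγ : γ ∈ Set.range (phi α))
    (T : ∀ i : Fin k, SimpleGraph (FactSub α γ i))
    (hT : ∀ i : Fin k, Nonempty (FactSub α γ i) →
      IsMWSpanningTree (fun z w => distF z.val w.val) ⊤ (T i)) :
    (Gprime α γ T).Connected := by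
  classical
  obtain ⟨z0, hz0⟩ := hγ
  have hnonempty : Nonempty (FactType α γ) := ⟨⟨z0, hz0⟩⟩
  suffices h : ∀ (n : ℕ) (u v : FactType α γ), len u.val + len v.val ≤ n →
      (Gprime α γ T).Reachable u v by
    haveI := hnonempty
    exact SimpleGraph.Connected.mk (fun u v => h _ u v le_rfl)
  intro n
  induction n using Nat.strong_induction_on with
  | _ n IH =>
  intro u v hn
  by_cases huv : u.val = v.val
  · exact (Subtype.ext huv : u = v) ▸ SimpleGraph.Reachable.refl u
  by_cases hsupp : ∃ i, 0 < u.val i ∧ 0 < v.val i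
  · obtain ⟨i, hu, hv⟩ := hsupp
    exact Stmt9Aux.treeReach hT u v i hu hv
  push_neg at hsupp
  have hdisj : ∀ i, u.val i = 0 ∨ v.val i = 0 := by
    intro i
    by_cases h1 : u.val i = 0
    · exact Or.inl h1
    · right
      have := hsupp i (Nat.pos_of_ne_zero h1)
      omega
  have hpair : (u.val, v.val) ≠ (0 : (Fin k → ℕ) × (Fin k → ℕ)) := by
    intro h0
    rw [Prod.ext_iff] at h0
    exact huv (h0.1.trans h0.2.symm)
  obtain ⟨a, b, hg, ha, hb⟩ := Stmt9Aux.exists_graver α (len u.val + len v.val) u.val v.val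
    le_rfl (u.property.trans v.property.symm) hpair
  have hab0 : (a, b) ≠ 0 := hg.2.1
  by_cases haz : a = 0
  · -- a = 0, hence b ≠ 0 and phi α b = 0; shrink v
    have hbz : b ≠ 0 := by
      intro h0
      exact hab0 (by rw [haz, h0]; rfl)
    have hphib : phi α b = 0 := by
      have h1 := hg.1
      rw [haz, Stmt9Aux.phi_zero] at h1
      exact h1.symm
    have hv' : phi α (v.val - b) = γ := by
      have h2 : phi α (v.val - b + b) = phi α (v.val - b) + phi α b := Stmt9Aux.phi_add α _ _
      rw [tsub_add_cancel_of_le hb, hphib, add_zero] at h2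
      rw [← h2, v.property]
    let v' : FactType α γ := ⟨v.val - b, hv'⟩
    have step1 : (Gprime α γ T).Reachable v v' := by
      by_cases hvb : v.val - b = 0
      · have hveq : v.val = b := le_antisymm (tsub_eq_zero_iff_le.mp hvb) hb
        refine Stmt9Aux.graverReach v v' ?_ ?_
        · intro h
          apply hbz
          have h3 := congrArg Subtype.val h
          rw [hveq] at h3
          exact h3.trans hvb
        · show IsGraver α (v.val, v'.val)
          have h4 : v'.val = 0 := hvb
          rw [hveq, h4]
          exact Stmt9Aux.graver_swap (haz ▸ hg)
      · obtain ⟨j, hj⟩ := Stmt9Aux.fn_exists_pos hvb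
        have hj' : 0 < v.val j - b j := hj
        have hvj : 0 < v.val j := lt_of_lt_of_le hj' (Nat.sub_le _ _)
        exact Stmt9Aux.treeReach hT v v' j hvj hj
    have hlen : len (v.val - b) < len v.val := by
      refine Stmt9Aux.len_lt_of_lt tsub_le_self ?_
      intro h5
      obtain ⟨j, hj⟩ := Stmt9Aux.fn_exists_pos hbz
      have h6 : v.val j - b j = v.val j := congrFun h5 j
      have h7 : b j ≤ v.val j := hb j
      omega
    have hmeas : len u.val + len (v.val - b) < n := by omega
    have step2 := IH (len u.val + len (v.val - b)) hmeas u v' le_rfl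
    exact step2.trans step1.symm
  by_cases hbz : b = 0
  · -- b = 0, hence a ≠ 0 and phi α a = 0; shrink u
    have hphia : phi α a = 0 := by
      have h1 := hg.1
      rw [hbz, Stmt9Aux.phi_zero] at h1
      exact h1
    have hu' : phi α (u.val - a) = γ := by
      have h2 : phi α (u.val - a + a) = phi α (u.val - a) + phi α a := Stmt9Aux.phi_add α _ _
      rw [tsub_add_cancel_of_le ha, hphia, add_zero] at h2
      rw [← h2, u.property]
    let u' : FactType α γ := ⟨u.val - a, hu'⟩
    have step1 : (Gprime α γ T).Reachable u u' := by
      by_cases hua : u.val - a = 0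
      · have hueq : u.val = a := le_antisymm (tsub_eq_zero_iff_le.mp hua) ha
        refine Stmt9Aux.graverReach u u' ?_ ?_
        · intro h
          apply haz
          have h3 := congrArg Subtype.val h
          rw [hueq] at h3
          exact h3.trans hua
        · show IsGraver α (u.val, u'.val)
          have h4 : u'.val = 0 := hua
          rw [hueq, h4]
          exact hbz ▸ hg
      · obtain ⟨j, hj⟩ := Stmt9Aux.fn_exists_pos hua
        have hj' : 0 < u.val j - a j := hj
        have huj : 0 < u.val j := lt_of_lt_of_le hj' (Nat.sub_le _ _)
        exact Stmt9Aux.treeReach hT u u' j huj hj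
    have hlen : len (u.val - a) < len u.val := by
      refine Stmt9Aux.len_lt_of_lt tsub_le_self ?_
      intro h5
      obtain ⟨j, hj⟩ := Stmt9Aux.fn_exists_pos haz
      have h6 : u.val j - a j = u.val j := congrFun h5 j
      have h7 : a j ≤ u.val j := ha j
      omega
    have hmeas : len (u.val - a) + len v.val < n := by omega
    have step2 := IH (len (u.val - a) + len v.val) hmeas u' v le_rfl
    exact step1.trans step2
  · -- a ≠ 0 and b ≠ 0
    have hm : phi α (u.val - a + b) = γ := by
      have h2 : phi α (u.val - a + b) = phi α (u.val - a) + phi α b := Stmt9Aux.phi_add α _ _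
      have h3 : phi α (u.val - a + a) = phi α (u.val - a) + phi α a := Stmt9Aux.phi_add α _ _
      rw [tsub_add_cancel_of_le ha] at h3
      rw [h2, ← hg.1, ← h3, u.property]
    let m : FactType α γ := ⟨u.val - a + b, hm⟩
    have step1 : (Gprime α γ T).Reachable u m := by
      by_cases hua : u.val - a = 0
      · have hueq : u.val = a := le_antisymm (tsub_eq_zero_iff_le.mp hua) ha
        have hmb : m.val = b := by
          show u.val - a + b = b
          rw [hua, zero_add]
        have habne : a ≠ b := by
          intro h0
          apply haz
          funext i
          show a i = 0
          have h2 : a i ≤ u.val i := ha i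
          have h3 : b i ≤ v.val i := hb i
          have h1 : a i = b i := congrFun h0 i
          rcases hdisj i with h | h <;> omega
        refine Stmt9Aux.graverReach u m ?_ ?_
        · intro h
          apply habne
          have h3 := congrArg Subtype.val h
          rw [hueq, hmb] at h3
          exact h3
        · show IsGraver α (u.val, m.val)
          rw [hueq, hmb]
          exact hg
      · obtain ⟨j, hj⟩ := Stmt9Aux.fn_exists_pos hua
        have hj' : 0 < u.val j - a j := hj
        have huj : 0 < u.val j := lt_of_lt_of_le hj' (Nat.sub_le _ _)
        have hmj : 0 < m.val j := by
          show 0 < u.val j - a j + b j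
          omega
        exact Stmt9Aux.treeReach hT u m j huj hmj
    have step2 : (Gprime α γ T).Reachable m v := by
      obtain ⟨j, hj⟩ := Stmt9Aux.fn_exists_pos hbz
      have hmj : 0 < m.val j := by
        show 0 < u.val j - a j + b j
        omega
      have hvj : 0 < v.val j := lt_of_lt_of_le hj (hb j)
      exact Stmt9Aux.treeReach hT m v j hmj hvj
    exact step1.trans step2
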